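/- For n > 1, the graded rings ℤ[x₁,x₂]/⟨x₁ⁿ(x₁+2x₂), x₂(x₁+x₂)⟩ and ℤ[y₁,y₂]/⟨y₁ⁿ(y₁+y₂), y₂(2y₁+y₂)⟩ are not isomorphic as graded rings. -/

import Mathlib

open MvPolynomial

def IsGradedIso (I J : Ideal (MvPolynomial (Fin 2) ℤ)) : Prop :=
  ∃ g : Fin 2 → MvPolynomial (Fin 2) ℤ,
    (∀ i, (g i).IsHomogeneous 1) ∧
    Function.Bijective ⇑(MvPolynomial.aeval (R := ℤ) g) ∧
    Ideal.map (MvPolynomial.aeval (R := ℤ) g) I = J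

namespace Stmt5Aux

lemma deg2 (m : Fin 2 →₀ ℕ) : m.degree = m 0 + m 1 := by
  rw [Finsupp.degree_apply, Finset.sum_subset (Finset.subset_univ m.support)
      (fun i _ hi => Finsupp.notMem_support_iff.mp hi), Fin.sum_univ_two]

lemma degw (m : Fin 2 →₀ ℕ) : (Finsupp.weight 1 m : ℕ) = m 0 + m 1 := by
  rw [← deg2, Finsupp.degree_eq_weight_one]; rfl

lemma homog1 (p : MvPolynomial (Fin 2) ℤ) (hp : p.IsHomogeneous 1) :
    p = C (coeff (Finsupp.single 0 1) p) * X 0 + C (coeff (Finsupp.single 1 1) p) * X 1 := by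
  ext m
  rw [coeff_add, coeff_C_mul, coeff_C_mul, coeff_X', coeff_X']
  by_cases h0 : Finsupp.single (0 : Fin 2) 1 = m
  · have h1 : ¬ Finsupp.single (1 : Fin 2) 1 = m := by
      rw [← h0]
      intro h
      have := DFunLike.congr_fun h 0
      simp [Finsupp.single_apply] at this
    rw [if_pos h0, if_neg h1, ← h0]; ring
  by_cases h1 : Finsupp.single (1 : Fin 2) 1 = m
  · rw [if_pos h1, if_neg h0, ← h1]; ring
  rw [if_neg h0, if_neg h1]
  simp only [mul_zero, add_zero, mul_one]
  by_contra hc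
  have hd : m 0 + m 1 = 1 := by rw [← degw]; exact hp hc
  have hor : (m 0 = 1 ∧ m 1 = 0) ∨ (m 0 = 0 ∧ m 1 = 1) := by omega
  rcases hor with ⟨ha, hb⟩ | ⟨ha, hb⟩
  · exact h0 (by ext i; fin_cases i <;> simp [Finsupp.single_apply, ha, hb])
  · exact h1 (by ext i; fin_cases i <;> simp [Finsupp.single_apply, ha, hb])

lemma comp_mul_zero (u f : MvPolynomial (Fin 2) ℤ) {N k : ℕ} (hf : f.IsHomogeneous N)
    (h : ∀ d : Fin 2 →₀ ℕ, d ∈ u.support → d.degree + N ≠ k) :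
    homogeneousComponent k (u * f) = 0 := by
  apply homogeneousComponent_eq_zero'
  intro d hd hdeg
  obtain ⟨a, ha, b, hb, rfl⟩ := Finset.mem_add.mp (support_mul u f hd)
  have hbN : b.degree = N := by
    rw [deg2, ← degw]; exact hf (mem_support_iff.mp hb)
  have : (a + b).degree = a.degree + b.degree := by
    simp [deg2, Finsupp.add_apply]; ring
  exact h a ha (by omega)

lemma comp1_aeval (g : Fin 2 → MvPolynomial (Fin 2) ℤ) (hg : ∀ i, (g i).IsHomogeneous 1)
    (p : MvPolynomial (Fin 2) ℤ) :
    homogeneousComponent 1 ((aeval g) p) = (aeval g) (homogeneousComponent 1 p) := by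
  calc homogeneousComponent 1 ((aeval g) p)
      = homogeneousComponent 1 ((aeval g)
          (∑ i ∈ Finset.range (p.totalDegree + 1), homogeneousComponent i p)) := by
        rw [sum_homogeneousComponent]
    _ = ∑ i ∈ Finset.range (p.totalDegree + 1),
          homogeneousComponent 1 ((aeval g) (homogeneousComponent i p)) := by
        rw [map_sum, map_sum]
    _ = ∑ i ∈ Finset.range (p.totalDegree + 1),
          if 1 = i then (aeval g) (homogeneousComponent i p) else 0 := by
        refine Finset.sum_congr rfl fun i _ => ?_
        apply homogeneousComponent_of_mem
        rw [mem_homogeneousSubmodule]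
        simpa using (homogeneousComponent_isHomogeneous i p).aeval g hg
    _ = (aeval g) (homogeneousComponent 1 p) := by
        rw [Finset.sum_ite_eq]
        split
        · rfl
        · next h =>
          have : p.totalDegree = 0 := by
            simp [Finset.mem_range] at h; omega
          rw [homogeneousComponent_eq_zero 1 p (by omega), map_zero]

end Stmt5Aux

open Stmt5Aux in
theorem stmt5 (n : ℕ) (hn : 1 < n) :
    ¬ IsGradedIso
        (Ideal.span {(X 0 : MvPolynomial (Fin 2) ℤ) ^ n * (X 0 + 2 * X 1), X 1 * (X 0 + X 1)})
        (Ideal.span {(X 0 : MvPolynomial (Fin 2) ℤ) ^ n * (X 0 + X 1), X 1 * (2 * X 0 + X 1)}) := by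

  rintro ⟨g, hg, ⟨hinj, hsur⟩, hmap⟩
  set a := coeff (Finsupp.single 0 1) (g 0) with ha'
  set b := coeff (Finsupp.single 1 1) (g 0) with hb'
  set c := coeff (Finsupp.single 0 1) (g 1) with hc'
  set d := coeff (Finsupp.single 1 1) (g 1) with hd'
  have hg0 : g 0 = C a * X 0 + C b * X 1 := homog1 _ (hg 0)
  have hg1 : g 1 = C c * X 0 + C d * X 1 := homog1 _ (hg 1)
  -- membership
  have hmem : (aeval g) ((X 1 : MvPolynomial (Fin 2) ℤ) * (X 0 + X 1)) ∈
      Ideal.span {(X 0 : MvPolynomial (Fin 2) ℤ) ^ n * (X 0 + X 1), X 1 * (2 * X 0 + X 1)} := by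
    rw [← hmap]
    exact Ideal.mem_map_of_mem _ (Ideal.subset_span (Set.mem_insert_iff.mpr (Or.inr rfl)))
  rw [Ideal.mem_span_pair] at hmem
  obtain ⟨u, v, huv⟩ := hmem
  set v₀ := coeff 0 v with hv₀
  -- apply homogeneousComponent 2
  have h2 := congrArg (homogeneousComponent 2) huv
  have hfhom : ((X 0 : MvPolynomial (Fin 2) ℤ) ^ n * (X 0 + X 1)).IsHomogeneous (n + 1) :=
    (isHomogeneous_X_pow _ _).mul ((isHomogeneous_X _ _).add (isHomogeneous_X _ _))
  have hghom : ((X 1 : MvPolynomial (Fin 2) ℤ) * (2 * X 0 + X 1)).IsHomogeneous 2 := by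
    have h2X : (2 * X 0 : MvPolynomial (Fin 2) ℤ) = C 2 * X 0 := by
      norm_num
    exact (isHomogeneous_X _ _).mul
      ((h2X ▸ (isHomogeneous_X (R := ℤ) (σ := Fin 2) 0).C_mul 2).add (isHomogeneous_X _ _))
  have hzero1 : homogeneousComponent 2 (u * ((X 0 : MvPolynomial (Fin 2) ℤ) ^ n * (X 0 + X 1)))
      = 0 := comp_mul_zero u _ hfhom (fun d _ => by omega)
  have hvsplit : v = C v₀ + (v - C v₀) := by ring
  have hzero2 : homogeneousComponent 2
      ((v - C v₀) * ((X 1 : MvPolynomial (Fin 2) ℤ) * (2 * X 0 + X 1))) = 0 := by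
    apply comp_mul_zero _ _ hghom
    intro e he
    have he0 : e ≠ 0 := by
      intro h
      rw [h, mem_support_iff] at he
      exact he (by rw [coeff_sub, coeff_zero_C, sub_self])
    have : e.degree ≠ 0 := fun h => he0 ((Finsupp.degree_eq_zero_iff e).mp h)
    omega
  have hcomp_g : homogeneousComponent 2 ((X 1 : MvPolynomial (Fin 2) ℤ) * (2 * X 0 + X 1))
      = X 1 * (2 * X 0 + X 1) := by
    rw [homogeneousComponent_of_mem ((mem_homogeneousSubmodule _ _).mpr hghom), if_pos rfl]
  have hPe : (aeval g) ((X 1 : MvPolynomial (Fin 2) ℤ) * (X 0 + X 1)) = g 1 * (g 0 + g 1) := by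
    rw [map_mul, map_add, aeval_X, aeval_X]
  rw [hPe] at h2
  have hPhom : (g 1 * (g 0 + g 1)).IsHomogeneous 2 := by
    simpa using (hg 1).mul ((hg 0).add (hg 1))
  have hcompP : homogeneousComponent 2 (g 1 * (g 0 + g 1)) = g 1 * (g 0 + g 1) := by
    rw [homogeneousComponent_of_mem ((mem_homogeneousSubmodule _ _).mpr hPhom), if_pos rfl]
  rw [map_add, hzero1, zero_add] at h2
  rw [hvsplit, add_mul, map_add, hzero2, add_zero, homogeneousComponent_C_mul, hcomp_g,
    hcompP, hg0, hg1] at h2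
  have e10 := congrArg (eval ![(1:ℤ), 0]) h2
  have e01 := congrArg (eval ![(0:ℤ), 1]) h2
  have e11 := congrArg (eval ![(1:ℤ), 1]) h2
  simp [eval_mul, eval_add, eval_C] at e10 e01 e11
  obtain ⟨p, hp⟩ := hsur (X 0)
  obtain ⟨q, hq⟩ := hsur (X 1)
  have hXc : ∀ (i : Fin 2), homogeneousComponent 1 (X i : MvPolynomial (Fin 2) ℤ) = X i := by
    intro i
    rw [homogeneousComponent_of_mem ((mem_homogeneousSubmodule _ _).mpr (isHomogeneous_X _ _)),
      if_pos rfl]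
  have hp1 : (aeval g) (homogeneousComponent 1 p) = X 0 := by
    rw [← comp1_aeval g hg p, hp, hXc]
  have hq1 : (aeval g) (homogeneousComponent 1 q) = X 1 := by
    rw [← comp1_aeval g hg q, hq, hXc]
  obtain ⟨α, β, hpc⟩ : ∃ α β, homogeneousComponent 1 p
      = C α * X 0 + C β * X 1 := ⟨_, _, homog1 _ (homogeneousComponent_isHomogeneous 1 p)⟩
  obtain ⟨γ, δ, hqc⟩ : ∃ γ δ, homogeneousComponent 1 q
      = C γ * X 0 + C δ * X 1 := ⟨_, _, homog1 _ (homogeneousComponent_isHomogeneous 1 q)⟩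
  rw [hpc, map_add, map_mul, map_mul, aeval_X, aeval_X, aeval_C, aeval_C, hg0, hg1] at hp1
  rw [hqc, map_add, map_mul, map_mul, aeval_X, aeval_X, aeval_C, aeval_C, hg0, hg1] at hq1
  have f10 := congrArg (eval ![(1:ℤ), 0]) hp1
  have f01 := congrArg (eval ![(0:ℤ), 1]) hp1
  have k10 := congrArg (eval ![(1:ℤ), 0]) hq1
  have k01 := congrArg (eval ![(0:ℤ), 1]) hq1
  simp [eval_mul, eval_add, eval_C] at f10 f01 k10 k01
  -- f10 : α * a + β * c = 1, f01 : α * b + β * d = 0,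
  -- k10 : γ * a + δ * c = 0, k01 : γ * b + δ * d = 1
  have key : (a * d - b * c) * (α * δ - β * γ) = 1 := by
    calc (a * d - b * c) * (α * δ - β * γ)
        = (α * a + β * c) * (γ * b + δ * d) - (α * b + β * d) * (γ * a + δ * c) := by ring
      _ = 1 := by rw [f10, f01, k10, k01]; ring
  have E2 : c * (b + d) + d * (a + c) + c * (a + c) = 2 * v₀ := by
    linear_combination e01 - e11
  rcases e10 with hc0 | hac
  · have hdet : a * d - b * c = 2 * v₀ := by
      linear_combination E2 - (2 * b + 2 * d + a + c) * hc0
    have h1 : (1 : ℤ) = 2 * (v₀ * (α * δ - β * γ)) := by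
      linear_combination -key + (α * δ - β * γ) * hdet
    have h2' : (2 : ℤ) ∣ 1 := ⟨_, h1⟩
    norm_num at h2'
  · have hdet : a * d - b * c = -(2 * v₀) := by
      linear_combination -E2 + (2 * d + c) * hac
    have h1 : (1 : ℤ) = 2 * (-(v₀ * (α * δ - β * γ))) := by
      linear_combination -key + (α * δ - β * γ) * hdet
    have h2' : (2 : ℤ) ∣ 1 := ⟨_, h1⟩
    norm_num at h2'
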